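/- The extended half-long line L̄₊ = L₊ ∪ {Ω}, with the order topology where Ω is a greatest element, is the Stone–Čech compactification of L₊: L̄₊ is a compact Hausdorff space containing L₊ as a dense subspace, and every continuous map from L₊ to a compact Hausdorff space extends continuously to L̄₊. -/

import Mathlib

/-- The set of countable ordinals (ordinals less than the first uncountable ordinal `ω₁`). -/
def SOmega : Type 1 := Set.Iio (Cardinal.aleph 1).ord

noncomputable instance : LinearOrder SOmega :=
  inferInstanceAs (LinearOrder (Set.Iio (Cardinal.aleph 1).ord))

/-- The half-open long line `L₊ = [0,1) × S_Ω` with the lexicographic order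
(ordinal coordinate first, then the real coordinate). -/
def LongLinePlus : Type 1 := SOmega ×ₗ (Set.Ico (0:ℝ) 1)

noncomputable instance : LinearOrder LongLinePlus :=
  inferInstanceAs (LinearOrder (SOmega ×ₗ (Set.Ico (0:ℝ) 1)))

/-- `L₊` carries the order topology. -/
noncomputable instance : TopologicalSpace LongLinePlus := Preorder.topology LongLinePlus
instance : OrderTopology LongLinePlus := ⟨rfl⟩

/-- The extended half-long line `L̄₊ = L₊ ∪ {Ω}`, with `Ω` adjoined as a top element,
given the order topology. -/
def LongLinePlusBar : Type 1 := WithTop LongLinePlus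

noncomputable instance : LinearOrder LongLinePlusBar :=
  inferInstanceAs (LinearOrder (WithTop LongLinePlus))

instance : OrderTop LongLinePlusBar := inferInstanceAs (OrderTop (WithTop LongLinePlus))

noncomputable instance : TopologicalSpace LongLinePlusBar := Preorder.topology LongLinePlusBar
instance : OrderTopology LongLinePlusBar := ⟨rfl⟩

/-- The inclusion `L₊ ↪ L̄₊`. -/
def LongLinePlus.toBar (x : LongLinePlus) : LongLinePlusBar := WithTop.some x

open Set Filter Topology

noncomputable section

namespace LLP

def ω₁ : Ordinal := (Cardinal.aleph 1).ord

lemma omega1_isLimit : Order.IsSuccLimit ω₁ := Cardinal.isSuccLimit_ord (Cardinal.aleph0_le_aleph 1)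

def mk (a : SOmega) (x : Set.Ico (0:ℝ) 1) : LongLinePlus := toLex (a, x)

def fst (p : LongLinePlus) : SOmega := (ofLex p).1
def snd (p : LongLinePlus) : Set.Ico (0:ℝ) 1 := (ofLex p).2

lemma le_iff' (p q : LongLinePlus) : p ≤ q ↔ fst p < fst q ∨ (fst p = fst q ∧ snd p ≤ snd q) :=
  Prod.Lex.le_iff

lemma lt_iff' (p q : LongLinePlus) : p < q ↔ fst p < fst q ∨ (fst p = fst q ∧ snd p < snd q) :=
  Prod.Lex.lt_iff

instance : Nonempty LongLinePlus :=
  ⟨mk ⟨0, omega1_isLimit.pos⟩ ⟨0, le_refl _, zero_lt_one⟩⟩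

instance : NoMaxOrder LongLinePlus := by
  constructor
  intro p
  refine ⟨mk ⟨Order.succ (fst p).1, omega1_isLimit.succ_lt (fst p).2⟩ ⟨0, le_refl _, zero_lt_one⟩, ?_⟩
  rw [lt_iff']
  left
  exact Subtype.coe_lt_coe.1 (Order.lt_succ _)

lemma coe_le_coe {p q : LongLinePlus} : p.toBar ≤ q.toBar ↔ p ≤ q := WithTop.coe_le_coe
lemma coe_lt_coe {p q : LongLinePlus} : p.toBar < q.toBar ↔ p < q := WithTop.coe_lt_coe

lemma exists_isLUB (s : Set LongLinePlusBar) : ∃ x, IsLUB s x := by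
  classical
  by_cases htop : ⊤ ∈ s
  · exact ⟨⊤, fun z _ => le_top, fun b hb => hb htop⟩
  set s' : Set LongLinePlus := {p | p.toBar ∈ s} with hs'
  by_cases hne : s'.Nonempty
  case neg =>
    -- s must be empty; bottom element is the LUB
    have hsempty : ∀ z, z ∉ s := by
      intro z hz
      induction z using WithTop.recTopCoe with
      | top => exact htop hz
      | coe p => exact hne ⟨p, hz⟩
    have hbot : ∀ q : LongLinePlus,
        mk ⟨0, omega1_isLimit.pos⟩ ⟨0, le_refl _, zero_lt_one⟩ ≤ q := by
      intro q
      rw [le_iff']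
      rcases (zero_le : (0:Ordinal) ≤ (fst q).1).lt_or_eq with h | h
      · left; exact Subtype.coe_lt_coe.1 h
      · right; exact ⟨Subtype.ext h, Subtype.coe_le_coe.1 (snd q).2.1⟩
    refine ⟨(mk ⟨0, omega1_isLimit.pos⟩ ⟨0, le_refl _, zero_lt_one⟩).toBar,
      fun z hz => absurd hz (hsempty z), ?_⟩
    intro b _
    induction b using WithTop.recTopCoe with
    | top => exact le_top
    | coe q => exact coe_le_coe.2 (hbot q)
  case pos =>
  obtain ⟨p₀, hp₀⟩ := hne
  set A : Set Ordinal := (fun p : LongLinePlus => ((fst p).1 : Ordinal)) '' s' with hA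
  have hAne : A.Nonempty := ⟨_, ⟨p₀, hp₀, rfl⟩⟩
  have hAsub : ∀ o ∈ A, o < ω₁ := by rintro o ⟨p, _, rfl⟩; exact (fst p).2
  have hAbdd : BddAbove A := ⟨ω₁, fun o ho => (hAsub o ho).le⟩
  set σ := sSup A with hσdef
  have hσub : ∀ o ∈ A, o ≤ σ := fun o ho => le_csSup hAbdd ho
  have hub_coe : ∀ q : LongLinePlus, q.toBar ∈ upperBounds s → ∀ o ∈ A, o ≤ (fst q).1 := by
    rintro q hq o ⟨p, hp, rfl⟩
    have hpq : p ≤ q := coe_le_coe.1 (hq hp)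
    rcases (le_iff' p q).1 hpq with h | ⟨h, _⟩
    · exact (Subtype.coe_lt_coe.2 h).le
    · exact (congrArg Subtype.val h).le
  by_cases hσlt : σ < ω₁
  case neg =>
    refine ⟨⊤, fun z _ => le_top, ?_⟩
    intro b hb
    induction b using WithTop.recTopCoe with
    | top => exact le_rfl
    | coe q =>
      exact absurd (lt_of_le_of_lt (csSup_le hAne (hub_coe q hb)) (fst q).2) hσlt
  case pos =>
  by_cases hσA : σ ∈ A
  case pos =>
    obtain ⟨pσ, hpσ, hpσ2⟩ := hσA
    set α₀ : SOmega := ⟨σ, hσlt⟩ with hα₀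
    set T : Set ℝ := {x | ∃ p ∈ s', fst p = α₀ ∧ ((snd p : ℝ)) = x} with hT
    have hTne : T.Nonempty := ⟨(snd pσ : ℝ), pσ, hpσ, Subtype.ext hpσ2, rfl⟩
    have hTbdd : ∀ x ∈ T, x ≤ 1 := by rintro x ⟨p, _, _, rfl⟩; exact (snd p).2.2.le
    have hT0 : ∀ x ∈ T, 0 ≤ x := by rintro x ⟨p, _, _, rfl⟩; exact (snd p).2.1
    set t := sSup T with htdef
    have ht_ub : ∀ x ∈ T, x ≤ t := fun x hx => le_csSup ⟨1, hTbdd⟩ hx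
    have ht0 : 0 ≤ t := by
      obtain ⟨x0, hx0⟩ := hTne
      exact le_trans (hT0 _ hx0) (ht_ub _ hx0)
    have ht1 : t ≤ 1 := csSup_le hTne hTbdd
    have hub_snd : ∀ q : LongLinePlus, q.toBar ∈ upperBounds s → fst q = α₀ →
        ∀ x ∈ T, x ≤ (snd q : ℝ) := by
      rintro q hq hqα x ⟨p, hp, hpα, rfl⟩
      have hpq : p ≤ q := coe_le_coe.1 (hq hp)
      rcases (le_iff' p q).1 hpq with h | ⟨_, h2⟩
      · rw [hpα, hqα] at h; exact absurd h (lt_irrefl _)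
      · exact Subtype.coe_le_coe.2 h2
    by_cases htlt : t < 1
    case pos =>
      refine ⟨(mk α₀ ⟨t, ht0, htlt⟩).toBar, ?_, ?_⟩
      · rintro z hz
        induction z using WithTop.recTopCoe with
        | top => exact absurd hz htop
        | coe p =>
          refine coe_le_coe.2 ?_
          rw [le_iff']
          rcases (hσub _ ⟨p, hz, rfl⟩).lt_or_eq with h | h
          · left; exact Subtype.coe_lt_coe.1 h
          · right
            exact ⟨Subtype.ext h, Subtype.coe_le_coe.1 (ht_ub _ ⟨p, hz, Subtype.ext h, rfl⟩)⟩
      · intro b hb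
        induction b using WithTop.recTopCoe with
        | top => exact le_top
        | coe q =>
          refine coe_le_coe.2 ?_
          rw [le_iff']
          rcases (csSup_le hAne (hub_coe q hb)).lt_or_eq with h | h
          · left; exact Subtype.coe_lt_coe.1 h
          · right
            refine ⟨Subtype.ext h, ?_⟩
            exact Subtype.coe_le_coe.1 (csSup_le hTne (hub_snd q hb (Subtype.ext h.symm)))
    case neg =>
      have ht1' : t = 1 := le_antisymm ht1 (not_lt.1 htlt)
      set α₁ : SOmega := ⟨Order.succ σ, omega1_isLimit.succ_lt hσlt⟩ with hα₁
      refine ⟨(mk α₁ ⟨0, le_refl _, zero_lt_one⟩).toBar, ?_, ?_⟩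
      · rintro z hz
        induction z using WithTop.recTopCoe with
        | top => exact absurd hz htop
        | coe p =>
          refine coe_le_coe.2 ?_
          rw [le_iff']
          left
          exact Subtype.coe_lt_coe.1 (lt_of_le_of_lt (hσub _ ⟨p, hz, rfl⟩) (Order.lt_succ σ))
      · intro b hb
        induction b using WithTop.recTopCoe with
        | top => exact le_top
        | coe q =>
          refine coe_le_coe.2 ?_
          rw [le_iff']
          rcases (csSup_le hAne (hub_coe q hb)).lt_or_eq with h | h
          · have h' : Order.succ σ ≤ (fst q).1 := Order.succ_le_of_lt h
            rcases h'.lt_or_eq with h'' | h''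
            · left; exact Subtype.coe_lt_coe.1 h''
            · right; exact ⟨Subtype.ext h'', Subtype.coe_le_coe.1 (snd q).2.1⟩
          · exfalso
            have h1le : (1 : ℝ) ≤ (snd q : ℝ) :=
              le_trans (le_of_eq ht1'.symm)
                (csSup_le hTne (hub_snd q hb (Subtype.ext h.symm)))
            exact absurd (snd q).2.2 (not_lt.2 h1le)
  case neg =>
    refine ⟨(mk ⟨σ, hσlt⟩ ⟨0, le_refl _, zero_lt_one⟩).toBar, ?_, ?_⟩
    · rintro z hz
      induction z using WithTop.recTopCoe with
      | top => exact absurd hz htop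
      | coe p =>
        refine coe_le_coe.2 ?_
        rw [le_iff']
        left
        rcases (hσub _ ⟨p, hz, rfl⟩).lt_or_eq with h | h
        · exact Subtype.coe_lt_coe.1 h
        · exact absurd (h ▸ ⟨p, hz, rfl⟩ : σ ∈ A) hσA
    · intro b hb
      induction b using WithTop.recTopCoe with
      | top => exact le_top
      | coe q =>
        refine coe_le_coe.2 ?_
        rw [le_iff']
        rcases (csSup_le hAne (hub_coe q hb)).lt_or_eq with h | h
        · left; exact Subtype.coe_lt_coe.1 h
        · right; exact ⟨Subtype.ext h, Subtype.coe_le_coe.1 (snd q).2.1⟩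

instance compactSpace_bar : CompactSpace LongLinePlusBar := by
  refine ⟨?_⟩
  rw [isCompact_iff_ultrafilter_le_nhds]
  intro F _
  set s : Set LongLinePlusBar := {x | Iic x ∈ F} with hs
  obtain ⟨a, ha⟩ := exists_isLUB (lowerBounds s)
  have hglb : IsGLB s a := ⟨fun x hx => ha.2 fun l hl => hl hx, fun l hl => ha.1 hl⟩
  refine ⟨a, mem_univ a, ?_⟩
  rw [nhds_eq_order]
  refine le_inf ?_ ?_
  · refine le_iInf₂ fun b hb => le_principal_iff.2 ?_
    by_contra hnot
    have hIic : Iic b ∈ F := by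
      have := (Ultrafilter.compl_mem_iff_notMem).2 hnot
      rwa [compl_Ioi] at this
    exact absurd (hglb.1 hIic) (not_le.2 hb)
  · refine le_iInf₂ fun b hb => le_principal_iff.2 ?_
    have hxb : ∃ x ∈ s, x < b := by
      by_contra hno
      push_neg at hno
      have : b ∈ lowerBounds s := fun x hx => hno x hx
      exact absurd (hglb.2 this) (not_le.2 hb)
    obtain ⟨x, hxs, hxb'⟩ := hxb
    exact F.toFilter.mem_of_superset hxs fun y hy => lt_of_le_of_lt hy hxb'

lemma isEmbedding_toBar : Topology.IsEmbedding LongLinePlus.toBar := by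
  have h : @OrderTopology LongLinePlus
      (TopologicalSpace.induced LongLinePlus.toBar inferInstance) _ := by
    refine induced_orderTopology' LongLinePlus.toBar (fun {x y} => coe_lt_coe) ?_ ?_
    · intro a x hx
      induction x using WithTop.recTopCoe with
      | top => exact absurd hx (not_top_lt)
      | coe c => exact ⟨c, coe_lt_coe.1 hx, le_rfl⟩
    · intro a x hx
      induction x using WithTop.recTopCoe with
      | top =>
        obtain ⟨b, hb⟩ := exists_gt a
        exact ⟨b, hb, le_top⟩
      | coe c => exact ⟨c, coe_lt_coe.1 hx, le_rfl⟩
  have heq : (inferInstance : TopologicalSpace LongLinePlus) =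
      TopologicalSpace.induced LongLinePlus.toBar inferInstance :=
    (OrderTopology.topology_eq_generate_intervals (α := LongLinePlus)).trans
      h.topology_eq_generate_intervals.symm
  exact ⟨⟨heq⟩, fun a b hab => Option.some_injective _ hab⟩

lemma denseRange_toBar : DenseRange LongLinePlus.toBar := by
  intro x
  induction x using WithTop.recTopCoe with
  | coe p => exact subset_closure (mem_range_self p)
  | top =>
    have htends : Tendsto LongLinePlus.toBar atTop (𝓝 (⊤ : LongLinePlusBar)) := by
      rw [nhds_top_order]
      refine tendsto_iInf.2 fun l => tendsto_iInf.2 fun hl => tendsto_principal.2 ?_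
      induction l using WithTop.recTopCoe with
      | top => exact absurd hl (lt_irrefl _)
      | coe c =>
        obtain ⟨c', hc'⟩ := exists_gt c
        filter_upwards [eventually_ge_atTop c'] with x hx
        exact mem_Ioi.2 (lt_of_lt_of_le (coe_lt_coe.2 hc') (coe_le_coe.2 hx))
    exact mem_closure_of_tendsto htends (Eventually.of_forall fun p => mem_range_self p)

lemma bdd_of_countable (w : ℕ → LongLinePlus) : ∃ b, ∀ n, w n < b := by
  set f : ℕ → Ordinal := fun n => (fst (w n)).1 with hf
  have hlt : ∀ n, f n < ω₁ := fun n => (fst (w n)).2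
  have hsup : (⨆ n, f n) < ω₁ := by
    refine Ordinal.iSup_lt_ord ?_ hlt
    show Cardinal.mk ℕ < (Cardinal.aleph 1).ord.cof
    rw [Cardinal.isRegular_aleph_one.cof_eq, Cardinal.mk_nat]
    exact Cardinal.aleph0_lt_aleph_one
  refine ⟨mk ⟨Order.succ (⨆ n, f n), omega1_isLimit.succ_lt hsup⟩ ⟨0, le_refl _, zero_lt_one⟩, ?_⟩
  intro n
  rw [lt_iff']
  left
  exact Subtype.coe_lt_coe.1
    (lt_of_le_of_lt (le_ciSup (Ordinal.bddAbove_range f) n) (Order.lt_succ _))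

lemma exists_isLUB_seq (w : ℕ → LongLinePlus) : ∃ l : LongLinePlus, IsLUB (range w) l := by
  obtain ⟨b, hb⟩ := bdd_of_countable w
  obtain ⟨x, hx⟩ := exists_isLUB (LongLinePlus.toBar '' range w)
  have hxb : x ≤ b.toBar := hx.2 (by rintro z ⟨p, ⟨n, rfl⟩, rfl⟩; exact coe_le_coe.2 (hb n).le)
  induction x using WithTop.recTopCoe with
  | top => exact absurd (top_le_iff.1 hxb) (by exact WithTop.coe_ne_top)
  | coe l =>
    refine ⟨l, ?_, ?_⟩
    · intro p hp
      exact coe_le_coe.1 (hx.1 ⟨p, hp, rfl⟩)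
    · intro c hc
      refine coe_le_coe.1 (hx.2 ?_)
      rintro z ⟨p, hp, rfl⟩
      exact coe_le_coe.2 (hc hp)

lemma tendsto_real (g : LongLinePlus → ℝ) (hg : Continuous g) :
    ∃ c, Tendsto g atTop (𝓝 c) := by
  suffices h : Cauchy (map g atTop) by
    obtain ⟨c, hc⟩ := CompleteSpace.complete h
    exact ⟨c, hc⟩
  rw [Metric.cauchy_iff]
  refine ⟨inferInstance, ?_⟩
  intro ε hε
  by_contra hcon
  push_neg at hcon
  have step : ∀ a : LongLinePlus, ∃ p : LongLinePlus × LongLinePlus,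
      a ≤ p.1 ∧ p.1 ≤ p.2 ∧ ε ≤ dist (g p.1) (g p.2) := by
    intro a
    have ht : g '' Ici a ∈ map g atTop := image_mem_map (mem_atTop a)
    obtain ⟨x, ⟨β, hβ, rfl⟩, y, ⟨γ, hγ, rfl⟩, hd⟩ := hcon _ ht
    rcases le_total β γ with h | h
    · exact ⟨(β, γ), hβ, h, hd⟩
    · exact ⟨(γ, β), hγ, h, by rwa [dist_comm]⟩
  choose P hP1 hP2 hP3 using step
  obtain ⟨a₀⟩ := (inferInstance : Nonempty LongLinePlus)
  let b : ℕ → LongLinePlus := fun n => Nat.recAux a₀ (fun _ prev => (P prev).2) n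
  have hbsucc : ∀ n, b (n + 1) = (P (b n)).2 := fun n => rfl
  have hbmono : Monotone b := by
    refine monotone_nat_of_le_succ fun n => ?_
    rw [hbsucc n]
    exact le_trans (hP1 (b n)) (hP2 (b n))
  obtain ⟨l, hl⟩ := exists_isLUB_seq b
  have hbt : Tendsto b atTop (𝓝 l) := tendsto_atTop_isLUB hbmono hl
  have hbt1 : Tendsto (fun n => b (n + 1)) atTop (𝓝 l) :=
    hbt.comp (tendsto_add_atTop_nat 1)
  have hut : Tendsto (fun n => (P (b n)).1) atTop (𝓝 l) := by
    refine tendsto_of_tendsto_of_tendsto_of_le_of_le hbt hbt1 (fun n => hP1 (b n)) fun n => ?_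
    rw [hbsucc n]
    exact hP2 (b n)
  have hvt : Tendsto (fun n => (P (b n)).2) atTop (𝓝 l) := hbt1
  have hgu : Tendsto (fun n => g ((P (b n)).1)) atTop (𝓝 (g l)) := (hg.tendsto l).comp hut
  have hgv : Tendsto (fun n => g ((P (b n)).2)) atTop (𝓝 (g l)) := (hg.tendsto l).comp hvt
  have hev1 : ∀ᶠ n in atTop, dist (g ((P (b n)).1)) (g l) < ε / 2 :=
    Metric.tendsto_nhds.1 hgu (ε / 2) (half_pos hε)
  have hev2 : ∀ᶠ n in atTop, dist (g ((P (b n)).2)) (g l) < ε / 2 :=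
    Metric.tendsto_nhds.1 hgv (ε / 2) (half_pos hε)
  obtain ⟨N, h1, h2⟩ := (hev1.and hev2).exists
  have hd : ε ≤ dist (g ((P (b N)).1)) (g ((P (b N)).2)) := hP3 (b N)
  have htri : dist (g ((P (b N)).1)) (g ((P (b N)).2)) < ε / 2 + ε / 2 := by
    calc dist (g ((P (b N)).1)) (g ((P (b N)).2))
        ≤ dist (g ((P (b N)).1)) (g l) + dist (g l) (g ((P (b N)).2)) := dist_triangle _ _ _
      _ < ε / 2 + ε / 2 := add_lt_add h1 (by rw [dist_comm]; exact h2)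
  linarith

lemma tendsto_compact (K : Type) [TopologicalSpace K] [CompactSpace K] [T2Space K]
    (f : LongLinePlus → K) (hf : Continuous f) : ∃ k, Tendsto f atTop (𝓝 k) := by
  let e : K → (C(K, ℝ) → ℝ) := fun k φ => φ k
  have he : Continuous e := continuous_pi fun φ => φ.continuous
  have hinj : Function.Injective e := by
    intro k k' hkk
    by_contra hne
    obtain ⟨φ, hφ0, hφ1, -⟩ := exists_continuous_zero_one_of_isClosed
      (isClosed_singleton (x := k)) (isClosed_singleton (x := k'))
      (by simpa [Set.disjoint_singleton] using hne)
    have h0 : φ k = 0 := hφ0 rfl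
    have h1 : φ k' = 1 := hφ1 rfl
    have hkk' : φ k = φ k' := congrFun hkk φ
    rw [h0, h1] at hkk'
    exact zero_ne_one hkk'
  have hce : Topology.IsClosedEmbedding e := he.isClosedEmbedding hinj
  have hcoord : ∀ φ : C(K, ℝ), ∃ c, Tendsto (fun x => φ (f x)) atTop (𝓝 c) :=
    fun φ => tendsto_real _ (φ.continuous.comp hf)
  choose L hL using hcoord
  have hTend : Tendsto (fun x => e (f x)) atTop (𝓝 L) := tendsto_pi_nhds.2 fun φ => hL φ
  have hmem : L ∈ Set.range e := by
    have hcl : L ∈ closure (Set.range e) :=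
      mem_closure_of_tendsto hTend (Eventually.of_forall fun x => Set.mem_range_self _)
    rwa [hce.isClosed_range.closure_eq] at hcl
  obtain ⟨k, rfl⟩ := hmem
  exact ⟨k, hce.isEmbedding.tendsto_nhds_iff.2 hTend⟩

lemma isOpenEmbedding_toBar : Topology.IsOpenEmbedding LongLinePlus.toBar := by
  refine ⟨isEmbedding_toBar, ?_⟩
  have hr : Set.range LongLinePlus.toBar = Iio (⊤ : LongLinePlusBar) := by
    ext z
    induction z using WithTop.recTopCoe with
    | top =>
      show (∃ y, LongLinePlus.toBar y = (⊤ : LongLinePlusBar)) ↔ (⊤ : LongLinePlusBar) < ⊤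
      simp only [mem_range, mem_Iio, lt_irrefl, iff_false]
      rintro ⟨p, hp⟩
      exact WithTop.coe_ne_top hp
    | coe p =>
      show (∃ y, LongLinePlus.toBar y = LongLinePlus.toBar p) ↔ LongLinePlus.toBar p < ⊤
      exact ⟨fun _ => WithTop.coe_lt_top p, fun _ => ⟨p, rfl⟩⟩
  rw [hr]
  exact isOpen_Iio

end LLP


/-- `L̄₊` is the Stone–Čech compactification of `L₊`: it is a compact Hausdorff space
containing `L₊` as a dense subspace, and every continuous map from `L₊` to a compact
Hausdorff space extends continuously to `L̄₊`. -/
theorem longLinePlusBar_is_stoneCech :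
    CompactSpace LongLinePlusBar ∧ T2Space LongLinePlusBar ∧
    Topology.IsEmbedding LongLinePlus.toBar ∧ DenseRange LongLinePlus.toBar ∧
    ∀ (K : Type) [TopologicalSpace K] [CompactSpace K] [T2Space K]
      (f : LongLinePlus → K), Continuous f →
        ∃ g : LongLinePlusBar → K, Continuous g ∧ g ∘ LongLinePlus.toBar = f := by
  refine ⟨LLP.compactSpace_bar, inferInstance, LLP.isEmbedding_toBar, LLP.denseRange_toBar, ?_⟩
  intro K _ _ _ f hf
  obtain ⟨k, hk⟩ := LLP.tendsto_compact K f hf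
  let g0 : LongLinePlusBar → K := fun x => WithTop.recTopCoe k f x
  refine ⟨g0, ?_, funext fun p => rfl⟩
  rw [continuous_iff_continuousAt]
  intro x
  induction x using WithTop.recTopCoe with
  | coe p =>
    have hcomp : ((fun x => WithTop.recTopCoe k f x) ∘ LongLinePlus.toBar) = f := rfl
    exact (LLP.isOpenEmbedding_toBar.continuousAt_iff).1 (by rw [hcomp]; exact hf.continuousAt)
  | top =>
    unfold ContinuousAt
    rw [Filter.tendsto_def]
    intro U hU
    have hU' : U ∈ 𝓝 k := hU
    obtain ⟨a, ha⟩ := mem_atTop_sets.1 (hk hU')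
    refine Filter.mem_of_superset ((isOpen_Ioi (a := a.toBar)).mem_nhds (WithTop.coe_lt_top a)) ?_
    intro z
    induction z using WithTop.recTopCoe with
    | top =>
      intro _
      show WithTop.recTopCoe k f (⊤ : LongLinePlusBar) ∈ U
      exact mem_of_mem_nhds hU'
    | coe p => exact fun hz => ha p (LLP.coe_lt_coe.1 hz).le
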